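/- Let g : [0,T] → [0,∞) be integrable with ∫_0^T g(s) ds < ∞, let (f_n)_{n≥0} be nonnegative functions on [0,T] with sup_{0≤s≤T} f_0(s) < ∞, and suppose f_n(t) ≤ ∫_0^t f_{n-1}(s) g(t-s) ds for all n ≥ 1 and t ∈ [0,T]. Then Σ_{n≥0} f_n(t) converges uniformly on [0,T]. -/

import Mathlib

open Real MeasureTheory Filter

theorem stmt_17 (T : ℝ) (hT : 0 < T) (g : ℝ → ℝ)
    (hg_nonneg : ∀ s ∈ Set.Icc (0:ℝ) T, 0 ≤ g s)
    (hg_int : IntegrableOn g (Set.Icc (0:ℝ) T))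
    (f : ℕ → ℝ → ℝ)
    (hf_nonneg : ∀ n, ∀ t ∈ Set.Icc (0:ℝ) T, 0 ≤ f n t)
    (hf0 : ∃ C : ℝ, ∀ s ∈ Set.Icc (0:ℝ) T, f 0 s ≤ C)
    (hrec : ∀ n : ℕ, ∀ t ∈ Set.Icc (0:ℝ) T,
      f (n + 1) t ≤ ∫ s in (0:ℝ)..t, f n s * g (t - s)) :
    TendstoUniformlyOn (fun N t => ∑ n ∈ Finset.range N, f n t)
      (fun t => ∑' n : ℕ, f n t) atTop (Set.Icc (0:ℝ) T) := by
  classical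
  obtain ⟨C0, hC0⟩ := hf0
  set C : ℝ := max C0 0 with hC_def
  have hC : 0 ≤ C := le_max_right _ _
  have hfC : ∀ s ∈ Set.Icc (0:ℝ) T, f 0 s ≤ C := fun s hs => (hC0 s hs).trans (le_max_left _ _)
  have hg_int' : IntegrableOn g (Set.Ioc (0:ℝ) T) := hg_int.mono_set Set.Ioc_subset_Icc_self
  -- choose K with small tail
  have hKex : ∃ K : ℝ, 0 ≤ K ∧ ∫ s in Set.Ioc (0:ℝ) T, max (g s - K) 0 ≤ 1/4 := by
    have hmeas : AEStronglyMeasurable g (volume.restrict (Set.Ioc (0:ℝ) T)) :=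
      hg_int'.aestronglyMeasurable
    have hlim : Tendsto (fun n : ℕ => ∫ s in Set.Ioc (0:ℝ) T, max (g s - n) 0) atTop
        (nhds (∫ _s in Set.Ioc (0:ℝ) T, (0:ℝ))) := by
      apply tendsto_integral_of_dominated_convergence (fun s => |g s|)
      · intro n
        exact ((hmeas.sub aestronglyMeasurable_const).aemeasurable.max
          aemeasurable_const).aestronglyMeasurable
      · exact hg_int'.abs
      · intro n
        filter_upwards with s
        rw [Real.norm_eq_abs, abs_of_nonneg (le_max_right _ _)]
        have hn : (0:ℝ) ≤ n := Nat.cast_nonneg n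
        rcases le_total (g s - n) 0 with h | h
        · rw [max_eq_right h]; exact abs_nonneg _
        · rw [max_eq_left h]
          have : g s - n ≤ g s := by linarith
          exact this.trans (le_abs_self _)
      · filter_upwards with s
        have hev : ∀ᶠ n : ℕ in atTop, max (g s - n) 0 = 0 := by
          filter_upwards [eventually_ge_atTop ⌈g s⌉₊] with n hn
          have h1 : g s ≤ n := (Nat.le_ceil _).trans (by exact_mod_cast hn)
          rw [max_eq_right (by linarith)]
        exact tendsto_const_nhds.congr' (hev.mono fun n h => h.symm)
    rw [integral_zero] at hlim
    obtain ⟨n, hn⟩ := (hlim.eventually_le_const (by norm_num : (0:ℝ) < 1/4)).exists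
    exact ⟨n, Nat.cast_nonneg n, hn⟩
  obtain ⟨K, hK0, hKtail⟩ := hKex
  set lam : ℝ := 4 * K + 1 with hlam_def
  have hlam : 0 < lam := by positivity
  -- the truncated tail is integrable
  have hh_int : IntegrableOn (fun s => max (g s - K) 0) (Set.Icc (0:ℝ) T) :=
    (hg_int.sub (integrableOn_const measure_Icc_lt_top.ne)).pos_part
  -- main induction
  have key : ∀ n, ∀ t ∈ Set.Icc (0:ℝ) T, f n t ≤ C * Real.exp (lam * t) * (1/2)^n := by
    intro n
    induction n with
    | zero =>
      intro t ht
      have h1 : (1:ℝ) ≤ Real.exp (lam * t) :=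
        Real.one_le_exp (mul_nonneg hlam.le ht.1)
      have := hfC t ht
      calc f 0 t ≤ C := this
        _ ≤ C * Real.exp (lam * t) * (1/2)^0 := by
            rw [pow_zero, mul_one]
            exact le_mul_of_one_le_right hC h1
    | succ n ih =>
      intro t ht
      obtain ⟨ht0, htT⟩ := ht
      have hh_ii : IntervalIntegrable (fun s => max (g s - K) 0) volume 0 t :=
        (hh_int.mono_set (by rw [Set.uIcc_of_le ht0]
                             exact Set.Icc_subset_Icc_right htT)).intervalIntegrable
      have hh_iiT : IntervalIntegrable (fun s => max (g s - K) 0) volume 0 T :=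
        (hh_int.mono_set (by rw [Set.uIcc_of_le hT.le])).intervalIntegrable
      have hIt0 : 0 ≤ ∫ s in (0:ℝ)..t, max (g s - K) 0 :=
        intervalIntegral.integral_nonneg ht0 (fun s _ => le_max_right _ _)
      have hIt : ∫ s in (0:ℝ)..t, max (g s - K) 0 ≤ 1/4 := by
        have h1 : ∫ s in (0:ℝ)..t, max (g s - K) 0 ≤ ∫ s in (0:ℝ)..T, max (g s - K) 0 :=
          intervalIntegral.integral_mono_interval le_rfl ht0 htT
            (Filter.Eventually.of_forall fun s => le_max_right _ _) hh_iiT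
        have h2 : ∫ s in (0:ℝ)..T, max (g s - K) 0
            = ∫ s in Set.Ioc (0:ℝ) T, max (g s - K) 0 :=
          intervalIntegral.integral_of_le hT.le
        linarith
      by_cases hint : IntervalIntegrable (fun s => f n s * g (t - s)) volume 0 t
      · -- integrable case
        have hh_cii : IntervalIntegrable (fun s => max (g (t - s) - K) 0) volume 0 t := by
          have := (hh_ii.comp_sub_left t).symm
          simpa using this
        have h_ii1 : IntervalIntegrable
            (fun s => K * C * (1/2)^n * Real.exp (lam * s)) volume 0 t := by
          apply Continuous.intervalIntegrable
          fun_prop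
        have h_ii2 : IntervalIntegrable
            (fun s => (C * Real.exp (lam * t) * (1/2)^n) * max (g (t - s) - K) 0) volume 0 t :=
          hh_cii.const_mul _
        have hpt : ∀ s ∈ Set.Icc (0:ℝ) t, f n s * g (t - s) ≤
            K * C * (1/2)^n * Real.exp (lam * s)
              + (C * Real.exp (lam * t) * (1/2)^n) * max (g (t - s) - K) 0 := by
          intro s hs
          obtain ⟨hs0, hst⟩ := hs
          have hsT : s ∈ Set.Icc (0:ℝ) T := ⟨hs0, hst.trans htT⟩
          have htsT : t - s ∈ Set.Icc (0:ℝ) T := ⟨by linarith, by linarith⟩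
          have h1 : f n s ≤ C * Real.exp (lam * s) * (1/2)^n := ih s hsT
          have h2 : g (t - s) ≤ K + max (g (t - s) - K) 0 := by
            have := le_max_left (g (t - s) - K) 0
            linarith
          have h3 : 0 ≤ g (t - s) := hg_nonneg _ htsT
          have h4 : 0 ≤ f n s := hf_nonneg n s hsT
          have h5 : Real.exp (lam * s) ≤ Real.exp (lam * t) :=
            Real.exp_le_exp.2 (by nlinarith [hlam.le])
          have h6 : (0:ℝ) ≤ max (g (t - s) - K) 0 := le_max_right _ _
          have hE : (0:ℝ) < Real.exp (lam * s) := Real.exp_pos _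
          have hP : (0:ℝ) < (1/2:ℝ)^n := by positivity
          have step1 : f n s * g (t - s)
              ≤ (C * Real.exp (lam * s) * (1/2)^n) * (K + max (g (t - s) - K) 0) :=
            mul_le_mul h1 h2 h3 (by positivity)
          have step2 : (C * Real.exp (lam * s) * (1/2)^n) * max (g (t - s) - K) 0
              ≤ (C * Real.exp (lam * t) * (1/2)^n) * max (g (t - s) - K) 0 := by
            apply mul_le_mul_of_nonneg_right _ h6
            apply mul_le_mul_of_nonneg_right _ hP.le
            exact mul_le_mul_of_nonneg_left h5 hC
          nlinarith [step1, step2]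
        have hmono := intervalIntegral.integral_mono_on ht0 hint (h_ii1.add h_ii2) hpt
        have hsplit : (∫ s in (0:ℝ)..t, (K * C * (1/2)^n * Real.exp (lam * s)
              + (C * Real.exp (lam * t) * (1/2)^n) * max (g (t - s) - K) 0))
            = (∫ s in (0:ℝ)..t, K * C * (1/2)^n * Real.exp (lam * s))
              + ∫ s in (0:ℝ)..t, (C * Real.exp (lam * t) * (1/2)^n) * max (g (t - s) - K) 0 :=
          intervalIntegral.integral_add h_ii1 h_ii2
        have hexp : (∫ s in (0:ℝ)..t, Real.exp (lam * s))
            = (Real.exp (lam * t) - 1) / lam := by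
          rw [intervalIntegral.integral_comp_mul_left (fun x => Real.exp x) hlam.ne']
          simp [integral_exp, Real.exp_zero, smul_eq_mul, div_eq_inv_mul]
        have hcomp : (∫ s in (0:ℝ)..t, max (g (t - s) - K) 0)
            = ∫ s in (0:ℝ)..t, max (g s - K) 0 := by
          have := intervalIntegral.integral_comp_sub_left
            (a := (0:ℝ)) (b := t) (fun s => max (g s - K) 0) t
          simpa using this
        have hval : (∫ s in (0:ℝ)..t, (K * C * (1/2)^n * Real.exp (lam * s)
              + (C * Real.exp (lam * t) * (1/2)^n) * max (g (t - s) - K) 0))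
            = K * C * (1/2)^n * ((Real.exp (lam * t) - 1) / lam)
              + (C * Real.exp (lam * t) * (1/2)^n) * ∫ s in (0:ℝ)..t, max (g s - K) 0 := by
          rw [hsplit, intervalIntegral.integral_const_mul, intervalIntegral.integral_const_mul,
            hexp, hcomp]
        have hE1 : (1:ℝ) ≤ Real.exp (lam * t) :=
          Real.one_le_exp (mul_nonneg hlam.le ht0)
        have hKE : K * ((Real.exp (lam * t) - 1) / lam) ≤ Real.exp (lam * t) / 4 := by
          rw [← mul_div_assoc, div_le_div_iff₀ hlam (by norm_num : (0:ℝ) < 4)]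
          nlinarith [hE1, hK0]
        have hfinal : K * C * (1/2)^n * ((Real.exp (lam * t) - 1) / lam)
              + (C * Real.exp (lam * t) * (1/2)^n) * ∫ s in (0:ℝ)..t, max (g s - K) 0
            ≤ C * Real.exp (lam * t) * (1/2)^(n+1) := by
          have hP : (0:ℝ) < (1/2:ℝ)^n := by positivity
          have h7 : K * C * (1/2)^n * ((Real.exp (lam * t) - 1) / lam)
              ≤ C * (1/2)^n * (Real.exp (lam * t) / 4) := by
            have := mul_le_mul_of_nonneg_left hKE (mul_nonneg hC hP.le)
            nlinarith [this]
          have h8 : (C * Real.exp (lam * t) * (1/2)^n) * (∫ s in (0:ℝ)..t, max (g s - K) 0)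
              ≤ (C * Real.exp (lam * t) * (1/2)^n) * (1/4) := by
            apply mul_le_mul_of_nonneg_left hIt
            positivity
          rw [pow_succ]
          nlinarith [h7, h8]
        calc f (n + 1) t ≤ ∫ s in (0:ℝ)..t, f n s * g (t - s) := hrec n t ⟨ht0, htT⟩
          _ ≤ _ := hmono
          _ = _ := hval
          _ ≤ C * Real.exp (lam * t) * (1/2)^(n+1) := hfinal
      · -- non-integrable case: the interval integral is zero
        have h0 := hrec n t ⟨ht0, htT⟩
        rw [intervalIntegral.integral_undef hint] at h0
        exact h0.trans (by positivity)
  -- conclude uniform convergence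
  have hu : Summable (fun n : ℕ => C * Real.exp (lam * T) * (1/2)^n) := by
    apply Summable.mul_left
    exact summable_geometric_of_lt_one (by norm_num) (by norm_num)
  apply tendstoUniformlyOn_tsum_nat hu
  intro n t ht
  rw [Real.norm_eq_abs, abs_of_nonneg (hf_nonneg n t ht)]
  have h1 := key n t ht
  have h2 : Real.exp (lam * t) ≤ Real.exp (lam * T) :=
    Real.exp_le_exp.2 (mul_le_mul_of_nonneg_left ht.2 hlam.le)
  have hP : (0:ℝ) ≤ (1/2:ℝ)^n := by positivity
  calc f n t ≤ C * Real.exp (lam * t) * (1/2)^n := h1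
    _ ≤ C * Real.exp (lam * T) * (1/2)^n := by
        apply mul_le_mul_of_nonneg_right _ hP
        exact mul_le_mul_of_nonneg_left h2 hC
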